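/- Let ρ₀, δ, c₂ ≥ c₁ > 0 and let A : ℝ → ℝ be differentiable with A(0) = 0 and c₁ ≤ A′(t) ≤ c₂ < 1 for all t. Let V ⊂ ℝ be a set such that every interval J of length |J| ≥ 1 contains at most ρ₀|J| points of V. Then there exists C > 0 such that for all b ≥ 0 and 0 ≤ L ≤ 1: ∫_b^{b+L} [ Σ_{v ∈ A(V), |v − α| ≤ δ} (1 + α²(v − α)²)^{-1} + (1 + α²)^{-1} ] dα ≤ C/(1 + b). -/

import Mathlib

open MeasureTheory Set

-- per-v integral bound
lemma key_int (b L v : ℝ) (hb : 0 ≤ b) (hL0 : 0 ≤ L) (hL1 : L ≤ 1) :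
    ∫ α in Icc b (b + L), (1 + α ^ 2 * (v - α) ^ 2)⁻¹ ≤ 2 * Real.pi / (1 + b) := by
  have hpi := Real.pi_gt_three
  have hb1 : (0:ℝ) < 1 + b := by linarith
  rcases le_total b 1 with hble | hbge
  · -- b ≤ 1 : integrand ≤ 1
    have h1 : ∫ α in Icc b (b + L), (1 + α ^ 2 * (v - α) ^ 2)⁻¹
        ≤ ∫ _α in Icc b (b + L), (1:ℝ) := by
      apply integral_mono_of_nonneg
      · exact Filter.Eventually.of_forall fun α => by positivity
      · exact continuous_const.integrableOn_Icc
      · exact Filter.Eventually.of_forall fun α => by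
          rw [inv_le_one_iff₀]; right; nlinarith [sq_nonneg α, sq_nonneg (v - α), sq_nonneg (α * (v-α))]
    have h2 : ∫ _α in Icc b (b + L), (1:ℝ) = L := by
      simp [Real.volume_Icc, ENNReal.toReal_ofReal hL0, hL0]
    rw [h2] at h1
    have h3 : (1:ℝ) ≤ 2 * Real.pi / (1 + b) := by
      rw [le_div_iff₀ hb1]; nlinarith
    linarith
  · -- b ≥ 1
    have hbpos : (0:ℝ) < b := by linarith
    have step1 : ∫ α in Icc b (b + L), (1 + α ^ 2 * (v - α) ^ 2)⁻¹
        ≤ ∫ α in Icc b (b + L), (1 + b ^ 2 * (v - α) ^ 2)⁻¹ := by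
      apply integral_mono_of_nonneg
      · exact Filter.Eventually.of_forall fun α => by positivity
      · apply Continuous.integrableOn_Icc
        exact Continuous.inv₀ (by continuity) (fun α => by positivity)
      · filter_upwards [self_mem_ae_restrict measurableSet_Icc] with α hα
        have : b ^ 2 ≤ α ^ 2 := by nlinarith [hα.1]
        apply inv_anti₀ (by positivity)
        nlinarith [sq_nonneg (v - α)]
    have hcont : Continuous fun α : ℝ => (1 + b ^ 2 * (v - α) ^ 2)⁻¹ := by
      apply Continuous.inv₀ (by continuity)
      intro α; positivity
    have hderiv : ∀ x ∈ uIcc b (b + L),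
        HasDerivAt (fun α => b⁻¹ * Real.arctan (b * (α - v))) ((1 + b ^ 2 * (v - x) ^ 2)⁻¹) x := by
      intro x _
      have h1 : HasDerivAt (fun α : ℝ => b * (α - v)) b x := by
        simpa using ((hasDerivAt_id x).sub_const v).const_mul b
      have h2 := (Real.hasDerivAt_arctan (b * (x - v))).comp x h1
      have h3 := h2.const_mul b⁻¹
      refine h3.congr_deriv ?_
      have d1 : (1:ℝ) + (b * (x - v)) ^ 2 ≠ 0 := by positivity
      field_simp
      ring
    have step2 : ∫ α in Icc b (b + L), (1 + b ^ 2 * (v - α) ^ 2)⁻¹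
        = b⁻¹ * Real.arctan (b * ((b + L) - v)) - b⁻¹ * Real.arctan (b * (b - v)) := by
      rw [integral_Icc_eq_integral_Ioc, ← intervalIntegral.integral_of_le (by linarith : b ≤ b + L)]
      exact intervalIntegral.integral_eq_sub_of_hasDerivAt hderiv (hcont.intervalIntegrable _ _)
    have harc1 := Real.arctan_lt_pi_div_two (b * ((b + L) - v))
    have harc2 := Real.neg_pi_div_two_lt_arctan (b * (b - v))
    have hinv : (0:ℝ) < b⁻¹ := by positivity
    have step3 : b⁻¹ * Real.arctan (b * ((b + L) - v)) - b⁻¹ * Real.arctan (b * (b - v))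
        ≤ b⁻¹ * Real.pi := by nlinarith
    have step4 : b⁻¹ * Real.pi ≤ 2 * Real.pi / (1 + b) := by
      rw [inv_mul_eq_div, div_le_div_iff₀ hbpos hb1]
      nlinarith
    linarith

lemma key_int0 (b L : ℝ) (hb : 0 ≤ b) (hL0 : 0 ≤ L) (hL1 : L ≤ 1) :
    ∫ α in Icc b (b + L), (1 + α ^ 2)⁻¹ ≤ 2 * Real.pi / (1 + b) := by
  have hpi := Real.pi_gt_three
  have hb1 : (0:ℝ) < 1 + b := by linarith
  have h1 : ∫ α in Icc b (b + L), (1 + α ^ 2)⁻¹ ≤ ∫ _α in Icc b (b + L), (1 + b ^ 2)⁻¹ := by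
    apply integral_mono_of_nonneg
    · exact Filter.Eventually.of_forall fun α => by positivity
    · exact continuous_const.integrableOn_Icc
    · filter_upwards [self_mem_ae_restrict measurableSet_Icc] with α hα
      apply inv_anti₀ (by positivity)
      nlinarith [hα.1]
  have h2 : ∫ _α in Icc b (b + L), ((1:ℝ) + b ^ 2)⁻¹ = L * (1 + b ^ 2)⁻¹ := by
    simp [Real.volume_Icc, ENNReal.toReal_ofReal hL0, hL0]
  have h3 : L * (1 + b ^ 2)⁻¹ ≤ 2 * Real.pi / (1 + b) := by
    rw [div_eq_mul_inv, mul_comm L]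
    have hA : (1 + b ^ 2)⁻¹ * L ≤ (1 + b ^ 2)⁻¹ * 1 := by
      apply mul_le_mul_of_nonneg_left hL1 (by positivity)
    have hB : (1 + b ^ 2)⁻¹ ≤ 2 * Real.pi * (1 + b)⁻¹ := by
      rw [← div_eq_mul_inv, inv_le_iff_one_le_mul₀ (by positivity : (0:ℝ) < 1 + b^2), div_mul_eq_mul_div, le_div_iff₀ hb1]
      nlinarith [sq_nonneg (b - 1), sq_nonneg b]
    linarith
  linarith [h1, h2 ▸ h1]

/-- Corollary 5.3: integrating the derivative majorant of `g` over an interval `[b, b+L]`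
of length `≤ 1` yields the bound `C/(1+b)`, where the points `v = A(u)`, `u ∈ V`, are the
images under the rescaled critical-direction function `A` of the level-set points `V`,
whose density is controlled (any interval of length `≥ 1` contains at most `ρ₀·|J|`
of them). -/
theorem stmt19 (ρ₀ δ c₁ c₂ : ℝ) (hρ₀ : 0 < ρ₀) (hδ : 0 < δ)
    (hc₁ : 0 < c₁) (hc : c₁ ≤ c₂) (hc₂ : c₂ < 1)
    (A : ℝ → ℝ) (hA : Differentiable ℝ A) (hA0 : A 0 = 0)
    (hA' : ∀ t : ℝ, c₁ ≤ deriv A t ∧ deriv A t ≤ c₂)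
    (V : Set ℝ)
    (hV : ∀ x y : ℝ, 1 ≤ y - x →
      (V ∩ Icc x y).Finite ∧ ((V ∩ Icc x y).ncard : ℝ) ≤ ρ₀ * (y - x)) :
    ∃ C > 0, ∀ b L : ℝ, 0 ≤ b → 0 ≤ L → L ≤ 1 →
      (∫ α in Icc b (b + L),
          ((∑' v : {v : ℝ // v ∈ A '' V ∧ |v - α| ≤ δ},
              (1 + α ^ 2 * ((v : ℝ) - α) ^ 2)⁻¹) +
            (1 + α ^ 2)⁻¹)) ≤ C / (1 + b) := by
  have hpi := Real.pi_gt_three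
  -- bi-Lipschitz lower bound
  have hlip : ∀ x y : ℝ, x ≤ y → c₁ * (y - x) ≤ A y - A x := by
    intro x y hxy
    rcases eq_or_lt_of_le hxy with rfl | h
    · simp
    · obtain ⟨c, _, hcs⟩ := exists_deriv_eq_slope A h hA.continuous.continuousOn
        (hA.differentiableOn)
      have h1 := (hA' c).1
      rw [hcs] at h1
      have h2 : c₁ * (y - x) ≤ (A y - A x) / (y - x) * (y - x) :=
        mul_le_mul_of_nonneg_right h1 (by linarith)
      rwa [div_mul_cancel₀ _ (by linarith : y - x ≠ 0)] at h2
  set M : ℝ := max 1 ((1 + 2 * δ) / c₁) with hMdef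
  have hM1 : (1:ℝ) ≤ M := le_max_left _ _
  have hMδ : (1 + 2 * δ) / c₁ ≤ M := le_max_right _ _
  have hcM : 1 + 2 * δ ≤ c₁ * M := by
    have := (div_le_iff₀ hc₁).mp hMδ; linarith
  set N : ℝ := ρ₀ * (2 * M) with hNdef
  have hN0 : 0 < N := by positivity
  refine ⟨(N + 1) * (2 * Real.pi), by positivity, ?_⟩
  intro b L hb hL0 hL1
  set W : Set ℝ := A '' V ∩ Icc (b - δ) (b + 1 + δ) with hWdef
  -- W is finite with card ≤ N
  have hWfc : W.Finite ∧ (W.ncard : ℝ) ≤ N := by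
    rcases W.eq_empty_or_nonempty with h | ⟨v₀, hv₀⟩
    · rw [h]; simp; positivity
    · obtain ⟨⟨u₀, hu₀V, rfl⟩, hv₀I⟩ := hv₀
      have hsub : W ⊆ A '' (V ∩ Icc (u₀ - M) (u₀ + M)) := by
        rintro v ⟨⟨u, huV, rfl⟩, hvI⟩
        refine ⟨u, ⟨huV, ?_, ?_⟩, rfl⟩
        · -- u₀ - M ≤ u
          by_contra hcon
          push_neg at hcon
          have := hlip u u₀ (by linarith)
          have h1 : A u₀ - A u ≤ 1 + 2 * δ := by
            simp only [mem_Icc] at hvI hv₀I; linarith [hvI.1, hv₀I.2]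
          nlinarith
        · by_contra hcon
          push_neg at hcon
          have := hlip u₀ u (by linarith)
          have h1 : A u - A u₀ ≤ 1 + 2 * δ := by
            simp only [mem_Icc] at hvI hv₀I; linarith [hvI.2, hv₀I.1]
          nlinarith
      obtain ⟨hfin, hcard⟩ := hV (u₀ - M) (u₀ + M) (by linarith)
      have hWfin : W.Finite := ((hfin.image A).subset hsub)
      refine ⟨hWfin, ?_⟩
      calc (W.ncard : ℝ) ≤ ((A '' (V ∩ Icc (u₀ - M) (u₀ + M))).ncard : ℝ) := by
            exact_mod_cast ncard_le_ncard hsub (hfin.image A)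
        _ ≤ ((V ∩ Icc (u₀ - M) (u₀ + M)).ncard : ℝ) := by
            exact_mod_cast ncard_image_le hfin
        _ ≤ ρ₀ * (u₀ + M - (u₀ - M)) := hcard
        _ = N := by rw [hNdef]; ring
  obtain ⟨hWfin, hWcard⟩ := hWfc
  set T : Finset ℝ := hWfin.toFinset with hTdef
  have hTcoe : (↑T : Set ℝ) = W := hWfin.coe_toFinset
  have hTcard : (T.card : ℝ) ≤ N := by
    rw [← ncard_eq_toFinset_card W hWfin] at *
    exact hWcard
  -- pointwise bound of the tsum
  have hpt : ∀ α ∈ Icc b (b + L),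
      (∑' v : {v : ℝ // v ∈ A '' V ∧ |v - α| ≤ δ}, (1 + α ^ 2 * ((v : ℝ) - α) ^ 2)⁻¹)
        ≤ ∑ v ∈ T, (1 + α ^ 2 * (v - α) ^ 2)⁻¹ := by
    intro α hα
    simp only [mem_Icc] at hα
    set f : ℝ → ℝ := fun v => (1 + α ^ 2 * (v - α) ^ 2)⁻¹ with hfdef
    have hfnn : (0:ℝ → ℝ) ≤ f := fun v => by positivity
    set S : Set ℝ := {v : ℝ | v ∈ A '' V ∧ |v - α| ≤ δ} with hSdef
    have hSsub : S ⊆ W := by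
      rintro v ⟨hv, hvd⟩
      rw [abs_le] at hvd
      exact ⟨hv, by constructor <;> [linarith [hvd.1]; linarith [hvd.2]]⟩
    have hSfin : S.Finite := hWfin.subset hSsub
    have hs1 : Summable (S.indicator f) := by
      apply summable_of_ne_finset_zero (s := hSfin.toFinset)
      intro x hx
      exact indicator_of_notMem (by simpa using hx) f
    have hs2 : Summable (W.indicator f) := by
      apply summable_of_ne_finset_zero (s := T)
      intro x hx
      exact indicator_of_notMem (by rwa [← hTcoe, Finset.mem_coe]) f
    calc (∑' v : {v : ℝ // v ∈ A '' V ∧ |v - α| ≤ δ}, f v)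
        = ∑' v : ℝ, S.indicator f v := tsum_subtype S f
      _ ≤ ∑' v : ℝ, W.indicator f v :=
          Summable.tsum_le_tsum (fun v => indicator_le_indicator_of_subset hSsub hfnn v) hs1 hs2
      _ = ∑ v ∈ T, f v := by rw [sum_eq_tsum_indicator f T, hTcoe]
  -- the majorant is integrable
  have hgcont : Continuous fun α : ℝ =>
      (∑ v ∈ T, (1 + α ^ 2 * (v - α) ^ 2)⁻¹) + (1 + α ^ 2)⁻¹ := by
    apply Continuous.add
    · apply continuous_finset_sum
      intro v _
      exact Continuous.inv₀ (by fun_prop) (fun α => by positivity)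
    · exact Continuous.inv₀ (by fun_prop) (fun α => by positivity)
  have hmono : (∫ α in Icc b (b + L),
        ((∑' v : {v : ℝ // v ∈ A '' V ∧ |v - α| ≤ δ},
            (1 + α ^ 2 * ((v : ℝ) - α) ^ 2)⁻¹) + (1 + α ^ 2)⁻¹))
      ≤ ∫ α in Icc b (b + L),
        ((∑ v ∈ T, (1 + α ^ 2 * (v - α) ^ 2)⁻¹) + (1 + α ^ 2)⁻¹) := by
    apply integral_mono_of_nonneg
    · exact Filter.Eventually.of_forall fun α => by
        have h1 : (0:ℝ) ≤ ∑' v : {v : ℝ // v ∈ A '' V ∧ |v - α| ≤ δ},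
            (1 + α ^ 2 * ((v : ℝ) - α) ^ 2)⁻¹ :=
          tsum_nonneg fun v => by positivity
        have h2 : (0:ℝ) ≤ (1 + α ^ 2)⁻¹ := by positivity
        exact add_nonneg h1 h2
    · exact hgcont.integrableOn_Icc
    · filter_upwards [self_mem_ae_restrict measurableSet_Icc] with α hα
      exact add_le_add_left (hpt α hα) _
  -- split the integral of the majorant
  have hintv : ∀ v : ℝ, IntegrableOn (fun α : ℝ => (1 + α ^ 2 * (v - α) ^ 2)⁻¹)
      (Icc b (b + L)) volume := fun v =>
    (Continuous.inv₀ (by fun_prop) (fun α => by positivity)).integrableOn_Icc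
  have hsplit : ∫ α in Icc b (b + L),
        ((∑ v ∈ T, (1 + α ^ 2 * (v - α) ^ 2)⁻¹) + (1 + α ^ 2)⁻¹)
      = (∑ v ∈ T, ∫ α in Icc b (b + L), (1 + α ^ 2 * (v - α) ^ 2)⁻¹)
        + ∫ α in Icc b (b + L), (1 + α ^ 2)⁻¹ := by
    rw [integral_add (g := fun α : ℝ => (1 + α ^ 2)⁻¹) (integrable_finset_sum T (fun v _ => hintv v))
      ((Continuous.inv₀ (by fun_prop) (fun α => by positivity)).integrableOn_Icc),
      integral_finset_sum T (fun v _ => hintv v)]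
  -- assemble
  have hsum : (∑ v ∈ T, ∫ α in Icc b (b + L), (1 + α ^ 2 * (v - α) ^ 2)⁻¹)
      ≤ (T.card : ℝ) * (2 * Real.pi / (1 + b)) := by
    calc (∑ v ∈ T, ∫ α in Icc b (b + L), (1 + α ^ 2 * (v - α) ^ 2)⁻¹)
        ≤ ∑ _v ∈ T, 2 * Real.pi / (1 + b) :=
          Finset.sum_le_sum fun v _ => key_int b L v hb hL0 hL1
      _ = (T.card : ℝ) * (2 * Real.pi / (1 + b)) := by
          rw [Finset.sum_const, nsmul_eq_mul]
  have hb1 : (0:ℝ) < 1 + b := by linarith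
  have hfrac : (0:ℝ) ≤ 2 * Real.pi / (1 + b) := by positivity
  calc (∫ α in Icc b (b + L),
        ((∑' v : {v : ℝ // v ∈ A '' V ∧ |v - α| ≤ δ},
            (1 + α ^ 2 * ((v : ℝ) - α) ^ 2)⁻¹) + (1 + α ^ 2)⁻¹))
      ≤ (∑ v ∈ T, ∫ α in Icc b (b + L), (1 + α ^ 2 * (v - α) ^ 2)⁻¹)
        + ∫ α in Icc b (b + L), (1 + α ^ 2)⁻¹ := by rw [← hsplit]; exact hmono
    _ ≤ (T.card : ℝ) * (2 * Real.pi / (1 + b)) + 2 * Real.pi / (1 + b) :=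
        add_le_add hsum (key_int0 b L hb hL0 hL1)
    _ = ((T.card : ℝ) + 1) * (2 * Real.pi / (1 + b)) := by ring
    _ ≤ (N + 1) * (2 * Real.pi / (1 + b)) :=
        mul_le_mul_of_nonneg_right (by linarith) hfrac
    _ = (N + 1) * (2 * Real.pi) / (1 + b) := by ring
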